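/- For every probability measure μ on Λ, the conditioned distribution φ_t^μ satisfies the nonlinear Kolmogorov forward equations: for every t > 0 and x ∈ Λ, (d/dt)φ_t^μ(x) = ∑_{y∈Λ} φ_t^μ(y)·(q(y,x) + q(y,0)·φ_t^μ(x)). -/

import Mathlib

open scoped BigOperators Topology

set_option maxHeartbeats 1000000

/-- the conditioned distribution `φ_t^μ` satisfies the nonlinear Kolmogorov
forward equations. -/
theorem fv_phi_forward_equations
    {Λ : Type*} [Countable Λ] [Nonempty Λ] [DecidableEq Λ]
    -- the rate matrix Q on Λ ∪ {0} (`none` is the absorbing state 0)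
    (q : Option Λ → Option Λ → ℝ)
    (hq_nonneg : ∀ x y, x ≠ y → 0 ≤ q x y)
    (hq_absorb : ∀ y, q none y = 0)
    (hq_summable : ∀ x, Summable (fun y : {y : Option Λ // y ≠ x} => q x (y : Option Λ)))
    (hq_diag : ∀ x, q x x = -∑' y : {y : Option Λ // y ≠ x}, q x (y : Option Λ))
    (qbar : ℝ)
    (hqbar : ∀ x, (∑' y : {y : Option Λ // y ≠ x}, q x (y : Option Λ)) ≤ qbar)
    -- the transition semigroup P of Q
    (P : ℝ → Option Λ → Option Λ → ℝ)
    (hP_nonneg : ∀ t, 0 ≤ t → ∀ x y, 0 ≤ P t x y)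
    (hP_rowsum : ∀ t, 0 ≤ t → ∀ x, HasSum (P t x) 1)
    (hP_zero : ∀ x y, P 0 x y = if x = y then 1 else 0)
    (hP_CK : ∀ s t, 0 ≤ s → 0 ≤ t → ∀ x y,
      P (t + s) x y = ∑' z : Option Λ, P t x z * P s z y)
    (hP_forward : ∀ t, 0 < t → ∀ z : Λ, ∀ x : Option Λ,
      HasDerivAt (fun s => P s (some z) x)
        (∑' y : Λ, P t (some z) (some y) * q (some y) x) t)
    (hP_pos : ∀ t, 0 < t → ∀ x y : Λ, 0 < P t (some x) (some y))
    (μ : Λ → ℝ) (hμ_nonneg : ∀ x, 0 ≤ μ x) (hμ_sum : HasSum μ 1)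
    -- the conditioned distribution φ_t^μ
    (φ : ℝ → Λ → ℝ)
    (hφ : ∀ t x, φ t x =
      (∑' z : Λ, μ z * P t (some z) (some x)) /
        (1 - ∑' z : Λ, μ z * P t (some z) none)) :
    ∀ t, 0 < t → ∀ x : Λ,
      HasDerivAt (fun s => φ s x)
        (∑' y : Λ, φ t y * (q (some y) (some x) + q (some y) none * φ t x)) t := by
  intro t ht x
  -- 0 ≤ qbar
  have hq0 : (0:ℝ) ≤ qbar := by
    have h : (∑' y : {y : Option Λ // y ≠ (none : Option Λ)}, q none (y : Option Λ)) = 0 := by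
      calc (∑' y : {y : Option Λ // y ≠ (none : Option Λ)}, q none (y : Option Λ))
          = ∑' _y : {y : Option Λ // y ≠ (none : Option Λ)}, (0:ℝ) :=
            tsum_congr (fun y => hq_absorb y)
        _ = 0 := tsum_zero
    linarith [hqbar (none : Option Λ)]
  -- |q a b| ≤ qbar for all a b
  have hqb : ∀ a b : Option Λ, |q a b| ≤ qbar := by
    intro a b
    rcases eq_or_ne a b with rfl | hab
    · have hnn : (0:ℝ) ≤ ∑' y : {y : Option Λ // y ≠ a}, q a (y : Option Λ) :=
        tsum_nonneg fun y => hq_nonneg a y.1 (Ne.symm y.2)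
      rw [hq_diag a, abs_neg, abs_of_nonneg hnn]
      exact hqbar a
    · rw [abs_of_nonneg (hq_nonneg a b hab)]
      calc q a b ≤ ∑' y : {y : Option Λ // y ≠ a}, q a (y : Option Λ) :=
            Summable.le_tsum (hq_summable a) ⟨b, Ne.symm hab⟩
              (fun j _ => hq_nonneg a j (Ne.symm j.2))
        _ ≤ qbar := hqbar a
  -- basic summability of rows of P
  have hPsum : ∀ s : ℝ, 0 ≤ s → ∀ z : Option Λ, Summable (P s z) :=
    fun s hs z => (hP_rowsum s hs z).summable
  have hPsum' : ∀ s : ℝ, 0 ≤ s → ∀ z : Option Λ, Summable (fun y : Λ => P s z (some y)) :=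
    fun s hs z => (hPsum s hs z).comp_injective (Option.some_injective Λ)
  have hPle1 : ∀ s : ℝ, 0 ≤ s → ∀ z y, P s z y ≤ 1 :=
    fun s hs z y => le_hasSum (hP_rowsum s hs z) y (fun j _ => hP_nonneg s hs z j)
  have hPΛle1 : ∀ s : ℝ, 0 ≤ s → ∀ z, (∑' y : Λ, P s z (some y)) ≤ 1 := by
    intro s hs z
    have := tsum_comp_le_tsum_of_inj (hPsum s hs z) (fun a => hP_nonneg s hs z a)
      (Option.some_injective Λ)
    rwa [(hP_rowsum s hs z).tsum_eq] at this
  -- summability of y ↦ P s z (some y) * q (some y) w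
  have hPQsum : ∀ s : ℝ, 0 ≤ s → ∀ z : Option Λ, ∀ w : Option Λ,
      Summable (fun y : Λ => P s z (some y) * q (some y) w) := by
    intro s hs z w
    refine Summable.of_norm_bounded (g := fun y => P s z (some y) * qbar)
      ((hPsum' s hs z).mul_right qbar) (fun y => ?_)
    rw [Real.norm_eq_abs, abs_mul, abs_of_nonneg (hP_nonneg s hs z (some y))]
    exact mul_le_mul_of_nonneg_left (hqb (some y) w) (hP_nonneg s hs z (some y))
  -- bound on the derivative of P
  have hDbound : ∀ s : ℝ, 0 < s → ∀ z : Λ, ∀ w : Option Λ,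
      |∑' y : Λ, P s (some z) (some y) * q (some y) w| ≤ qbar := by
    intro s hs z w
    have h1 : ‖∑' y : Λ, P s (some z) (some y) * q (some y) w‖ ≤
        ∑' y : Λ, P s (some z) (some y) * qbar := by
      refine tsum_of_norm_bounded ((hPsum' s hs.le (some z)).mul_right qbar).hasSum
        (fun y => ?_)
      rw [Real.norm_eq_abs, abs_mul, abs_of_nonneg (hP_nonneg s hs.le (some z) (some y))]
      exact mul_le_mul_of_nonneg_left (hqb (some y) w) (hP_nonneg s hs.le (some z) (some y))
    rw [Real.norm_eq_abs] at h1
    calc |∑' y : Λ, P s (some z) (some y) * q (some y) w|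
        ≤ ∑' y : Λ, P s (some z) (some y) * qbar := h1
      _ = (∑' y : Λ, P s (some z) (some y)) * qbar := tsum_mul_right
      _ ≤ qbar := mul_le_of_le_one_left hq0 (hPΛle1 s hs.le (some z))
  -- differentiate the series s ↦ ∑' z, μ z * P s (some z) w at t
  have hNderiv : ∀ w : Option Λ,
      HasDerivAt (fun s => ∑' z : Λ, μ z * P s (some z) w)
        (∑' z : Λ, μ z * ∑' y : Λ, P t (some z) (some y) * q (some y) w) t := by
    intro w
    refine hasDerivAt_tsum_of_isPreconnected
      (u := fun z : Λ => μ z * qbar)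
      (hμ_sum.summable.mul_right qbar) isOpen_Ioi isPreconnected_Ioi
      (g := fun z s => μ z * P s (some z) w)
      (g' := fun z s => μ z * ∑' y : Λ, P s (some z) (some y) * q (some y) w)
      (fun z s hs => (hP_forward s hs z w).const_mul (μ z))
      (fun z s hs => ?_) (Set.mem_Ioi.2 ht)
      (Summable.of_nonneg_of_le
        (fun z => mul_nonneg (hμ_nonneg z) (hP_nonneg t ht.le (some z) w))
        (fun z => mul_le_of_le_one_right (hμ_nonneg z) (hPle1 t ht.le (some z) w))
        hμ_sum.summable)
      (Set.mem_Ioi.2 ht)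
    rw [Real.norm_eq_abs, abs_mul, abs_of_nonneg (hμ_nonneg z)]
    exact mul_le_mul_of_nonneg_left (hDbound s hs z w) (hμ_nonneg z)
  -- Fubini: swap the order of summation in the derivative
  have hFub : ∀ w : Option Λ,
      (∑' z : Λ, μ z * ∑' y : Λ, P t (some z) (some y) * q (some y) w)
        = ∑' y : Λ, (∑' z : Λ, μ z * P t (some z) (some y)) * q (some y) w := by
    intro w
    have hUn : Summable (Function.uncurry
        (fun z y : Λ => μ z * (P t (some z) (some y) * q (some y) w))) := by
      refine Summable.of_norm_bounded
        (g := fun p : Λ × Λ => μ p.1 * (P t (some p.1) (some p.2) * qbar)) ?_ ?_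
      · refine (summable_prod_of_nonneg ?_).2 ⟨?_, ?_⟩
        · intro p
          exact mul_nonneg (hμ_nonneg p.1)
            (mul_nonneg (hP_nonneg t ht.le (some p.1) (some p.2)) hq0)
        · intro z
          exact ((hPsum' t ht.le (some z)).mul_right qbar).mul_left (μ z)
        · refine Summable.of_nonneg_of_le
            (fun z => tsum_nonneg fun y => mul_nonneg (hμ_nonneg z)
              (mul_nonneg (hP_nonneg t ht.le (some z) (some y)) hq0))
            (fun z => ?_) (hμ_sum.summable.mul_right qbar)
          show (∑' y : Λ, μ z * (P t (some z) (some y) * qbar)) ≤ μ z * qbar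
          rw [tsum_mul_left, tsum_mul_right]
          exact mul_le_mul_of_nonneg_left
            (mul_le_of_le_one_left hq0 (hPΛle1 t ht.le (some z))) (hμ_nonneg z)
      · intro p
        show ‖μ p.1 * (P t (some p.1) (some p.2) * q (some p.2) w)‖ ≤
          μ p.1 * (P t (some p.1) (some p.2) * qbar)
        rw [Real.norm_eq_abs, abs_mul, abs_mul,
          abs_of_nonneg (hμ_nonneg p.1), abs_of_nonneg (hP_nonneg t ht.le (some p.1) (some p.2))]
        exact mul_le_mul_of_nonneg_left
          (mul_le_mul_of_nonneg_left (hqb (some p.2) w)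
            (hP_nonneg t ht.le (some p.1) (some p.2))) (hμ_nonneg p.1)
    have h₁ : ∀ z : Λ, Summable (fun y : Λ => μ z * (P t (some z) (some y) * q (some y) w)) :=
      fun z => (hPQsum t ht.le (some z) w).mul_left (μ z)
    have h₂ : ∀ y : Λ, Summable (fun z : Λ => μ z * (P t (some z) (some y) * q (some y) w)) := by
      intro y
      refine Summable.of_norm_bounded (g := fun z => μ z * qbar)
        (hμ_sum.summable.mul_right qbar) (fun z => ?_)
      rw [Real.norm_eq_abs, abs_mul, abs_mul, abs_of_nonneg (hμ_nonneg z),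
        abs_of_nonneg (hP_nonneg t ht.le (some z) (some y))]
      refine mul_le_mul_of_nonneg_left ?_ (hμ_nonneg z)
      calc P t (some z) (some y) * |q (some y) w| ≤ 1 * qbar :=
            mul_le_mul (hPle1 t ht.le (some z) (some y)) (hqb (some y) w)
              (abs_nonneg _) zero_le_one
        _ = qbar := one_mul qbar
    have hcomm := Summable.tsum_comm' hUn h₁ h₂
    calc (∑' z : Λ, μ z * ∑' y : Λ, P t (some z) (some y) * q (some y) w)
        = ∑' z : Λ, ∑' y : Λ, μ z * (P t (some z) (some y) * q (some y) w) :=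
          tsum_congr fun z => (tsum_mul_left).symm
      _ = ∑' y : Λ, ∑' z : Λ, μ z * (P t (some z) (some y) * q (some y) w) := hcomm.symm
      _ = ∑' y : Λ, (∑' z : Λ, μ z * P t (some z) (some y)) * q (some y) w := by
          refine tsum_congr fun y => ?_
          rw [← tsum_mul_right]
          exact tsum_congr fun z => (mul_assoc _ _ _).symm
  -- notation for the numerator at time t
  set ν : Λ → ℝ := fun y => ∑' z : Λ, μ z * P t (some z) (some y) with hν
  have hν_nonneg : ∀ y, 0 ≤ ν y := fun y =>
    tsum_nonneg fun z => mul_nonneg (hμ_nonneg z) (hP_nonneg t ht.le (some z) (some y))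
  -- summability of ν
  have hFμ : Summable (fun p : Λ × Λ => μ p.1 * P t (some p.1) (some p.2)) := by
    refine (summable_prod_of_nonneg ?_).2 ⟨?_, ?_⟩
    · intro p
      exact mul_nonneg (hμ_nonneg p.1) (hP_nonneg t ht.le (some p.1) (some p.2))
    · intro z
      exact (hPsum' t ht.le (some z)).mul_left (μ z)
    · refine Summable.of_nonneg_of_le
        (fun z => tsum_nonneg fun y => mul_nonneg (hμ_nonneg z)
          (hP_nonneg t ht.le (some z) (some y)))
        (fun z => ?_) hμ_sum.summable
      show (∑' y : Λ, μ z * P t (some z) (some y)) ≤ μ z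
      rw [tsum_mul_left]
      exact mul_le_of_le_one_right (hμ_nonneg z) (hPΛle1 t ht.le (some z))
  have hν_sum : Summable ν := by
    have hswap : Summable (fun p : Λ × Λ => μ p.2 * P t (some p.2) (some p.1)) :=
      hFμ.prod_symm
    exact ((summable_prod_of_nonneg (fun p => mul_nonneg (hμ_nonneg p.2)
      (hP_nonneg t ht.le (some p.2) (some p.1)))).1 hswap).2
  -- the denominator is positive
  have hD_pos : 0 < 1 - ∑' z : Λ, μ z * P t (some z) none := by
    obtain ⟨z₀, hz₀⟩ : ∃ z₀, μ z₀ ≠ 0 := by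
      by_contra h
      push_neg at h
      have : (fun z : Λ => μ z) = fun _ => (0:ℝ) := funext h
      have h0 : HasSum μ 0 := by rw [show μ = fun _ => (0:ℝ) from this]; exact hasSum_zero
      exact one_ne_zero (hμ_sum.unique h0)
    have hz₀pos : 0 < μ z₀ := lt_of_le_of_ne (hμ_nonneg z₀) (Ne.symm hz₀)
    have hPnone : P t (some z₀) none < 1 := by
      have y₀ : Λ := Classical.arbitrary Λ
      have hsum2 : P t (some z₀) none + P t (some z₀) (some y₀) ≤ 1 := by
        have := sum_le_hasSum ({none, some y₀} : Finset (Option Λ))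
          (fun j _ => hP_nonneg t ht.le (some z₀) j) (hP_rowsum t ht.le (some z₀))
        simpa [Finset.sum_pair (show (none : Option Λ) ≠ some y₀ by simp)] using this
      linarith [hP_pos t ht z₀ y₀]
    have hlt : (∑' z : Λ, μ z * P t (some z) none) < ∑' z : Λ, μ z := by
      refine Summable.tsum_lt_tsum (i := z₀) (fun z => ?_) ?_ ?_ hμ_sum.summable
      · exact mul_le_of_le_one_right (hμ_nonneg z) (hPle1 t ht.le (some z) none)
      · calc μ z₀ * P t (some z₀) none < μ z₀ * 1 :=
            mul_lt_mul_of_pos_left hPnone hz₀pos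
          _ = μ z₀ := mul_one _
      · exact Summable.of_nonneg_of_le
          (fun z => mul_nonneg (hμ_nonneg z) (hP_nonneg t ht.le (some z) none))
          (fun z => mul_le_of_le_one_right (hμ_nonneg z) (hPle1 t ht.le (some z) none))
          hμ_sum.summable
    rw [hμ_sum.tsum_eq] at hlt
    linarith
  set Dq : ℝ := 1 - ∑' z : Λ, μ z * P t (some z) none with hDq
  have hD_ne : Dq ≠ 0 := ne_of_gt hD_pos
  -- derivatives of numerator and denominator
  have hNd : HasDerivAt (fun s => ∑' z : Λ, μ z * P s (some z) (some x))
      (∑' y : Λ, ν y * q (some y) (some x)) t := by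
    have := hNderiv (some x)
    rwa [hFub (some x)] at this
  have hDd : HasDerivAt (fun s => 1 - ∑' z : Λ, μ z * P s (some z) none)
      (-(∑' y : Λ, ν y * q (some y) none)) t := by
    have := (hNderiv none).const_sub 1
    rwa [hFub none] at this
  have hdiv := hNd.div hDd (by simpa [← hDq] using hD_ne)
  -- identify the function with φ ⬝ x
  have hfun : (fun s => φ s x) = fun s =>
      (∑' z : Λ, μ z * P s (some z) (some x)) / (1 - ∑' z : Λ, μ z * P s (some z) none) :=
    funext fun s => hφ s x
  rw [hfun]
  convert hdiv using 1
  · rfl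
  · rfl
  · rfl
  -- final algebraic identity
  have hφval : ∀ y : Λ, φ t y = ν y / Dq := fun y => hφ t y
  have hqsum : ∀ w : Option Λ, Summable (fun y : Λ => ν y * q (some y) w) := by
    intro w
    refine Summable.of_norm_bounded (g := fun y => ν y * qbar) (hν_sum.mul_right qbar) (fun y => ?_)
    rw [Real.norm_eq_abs, abs_mul, abs_of_nonneg (hν_nonneg y)]
    exact mul_le_mul_of_nonneg_left (hqb (some y) w) (hν_nonneg y)
  have key : ∀ y : Λ, φ t y * (q (some y) (some x) + q (some y) none * φ t x)
      = (ν y * q (some y) (some x)) * Dq⁻¹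
        + (ν y * q (some y) none) * (ν x / Dq ^ 2) := by
    intro y
    rw [hφval y, hφval x]
    field_simp
  calc (∑' y : Λ, φ t y * (q (some y) (some x) + q (some y) none * φ t x))
      = ∑' y : Λ, ((ν y * q (some y) (some x)) * Dq⁻¹
          + (ν y * q (some y) none) * (ν x / Dq ^ 2)) := tsum_congr key
    _ = (∑' y : Λ, (ν y * q (some y) (some x)) * Dq⁻¹)
          + ∑' y : Λ, (ν y * q (some y) none) * (ν x / Dq ^ 2) :=
        Summable.tsum_add ((hqsum (some x)).mul_right _) ((hqsum none).mul_right _)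
    _ = (∑' y : Λ, ν y * q (some y) (some x)) * Dq⁻¹
          + (∑' y : Λ, ν y * q (some y) none) * (ν x / Dq ^ 2) := by
        rw [tsum_mul_right, tsum_mul_right]
    _ = ((∑' y : Λ, ν y * q (some y) (some x)) * Dq
          - ν x * -(∑' y : Λ, ν y * q (some y) none)) / Dq ^ 2 := by
        field_simp
        ring
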